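/- Let r ≥ 1 and let s, t ≥ 0 be real numbers. If G is an n-vertex graph with e(G) ≥ (1 − 1/r)·n²/2 − t, and V(G) = V_1 ∪ … ∪ V_r is a partition of its vertex set such that the total number of edges inside the parts satisfies Σ_{i=1}^r e(V_i) ≤ s, then for each i ∈ {1,…,r} one has n/r − √(2(s+t)) ≤ |V_i| ≤ n/r + √(2(s+t)). -/

import Mathlib

open SimpleGraph

open Classical in
/-- The spectral radius (largest adjacency eigenvalue) of a finite simple graph. -/
noncomputable def specRad {V : Type*} [Fintype V] [DecidableEq V] (G : SimpleGraph V) : ℝ :=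
  sSup (spectrum ℝ (G.adjMatrix ℝ))

/-- The number of copies of `F` in `G`, i.e. the number of subgraphs of `G` isomorphic to `F`. -/
noncomputable def copiesCount {W V : Type*} (F : SimpleGraph W) (G : SimpleGraph V) : ℕ :=
  Nat.card {H : G.Subgraph // Nonempty (H.coe ≃g F)}

/-- A graph is color-critical if it has an edge whose deletion decreases the chromatic number. -/
def IsColorCritical {W : Type*} (F : SimpleGraph W) : Prop :=
  ∃ e ∈ F.edgeSet, (F.deleteEdges {e}).chromaticNumber < F.chromaticNumber

/-- `G` belongs to the family `𝒯_{n,r,q}` of graphs obtained from the Turán graph `T_{n,r}`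
by adding `q` new edges. -/
def InTuranPlus (n r q : ℕ) (G : SimpleGraph (Fin n)) : Prop :=
  turanGraph n r ≤ G ∧
    Nat.card (G.edgeSet \ (turanGraph n r).edgeSet : Set (Sym2 (Fin n))) = q

/-- `c(n,F)`: the minimum number of copies of `F` in a graph obtained from `T_{n,r}` by
adding a single edge. -/
noncomputable def cMin (n r : ℕ) {W : Type*} (F : SimpleGraph W) : ℕ :=
  sInf {m : ℕ | ∃ G : SimpleGraph (Fin n), InTuranPlus n r 1 G ∧ copiesCount F G = m}

/-- The `i`-th part of the Turán graph `turanGraph n r` (the residue class of `i` mod `r`). -/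
def turanPart (n r i : ℕ) : Finset (Fin n) :=
  Finset.univ.filter (fun v => (v : ℕ) % r = i)

/-- `D` is a matching with `q` edges whose vertices lie inside `P`. -/
def IsMatchingOn {V : Type*} (q : ℕ) (D : SimpleGraph V) (P : Set V) : Prop :=
  D.support ⊆ P ∧ Nat.card D.edgeSet = q ∧
    ∀ v : V, {w : V | D.Adj v w}.Subsingleton

/-- `D` is a triangle whose vertices lie inside `P`. -/
def IsTriangleOn {V : Type*} (D : SimpleGraph V) (P : Set V) : Prop :=
  ∃ a b c : V, a ≠ b ∧ a ≠ c ∧ b ≠ c ∧ ({a, b, c} : Set V) ⊆ P ∧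
    D = fromEdgeSet {s(a, b), s(a, c), s(b, c)}

/-- `D` is a star with `q` edges whose vertices lie inside `P`. -/
def IsStarOn {V : Type*} (q : ℕ) (D : SimpleGraph V) (P : Set V) : Prop :=
  ∃ (v : V) (S : Finset V), v ∉ S ∧ S.card = q ∧ insert v (S : Set V) ⊆ P ∧
    D = fromEdgeSet {e : Sym2 V | ∃ u ∈ S, e = s(v, u)}

/-- `H` is (a copy of) `Y_{n,r,q}`: obtained from `T_{n,r}` by adding a matching with `q`
edges inside a largest part. -/
def IsYGraph (n r q : ℕ) (H : SimpleGraph (Fin n)) : Prop :=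
  turanGraph n r ≤ H ∧
    ∃ i < r, (∀ j < r, (turanPart n r j).card ≤ (turanPart n r i).card) ∧
      IsMatchingOn q (H \ turanGraph n r) (turanPart n r i : Set (Fin n))

/-- `H` is (a copy of) `L_{n,r,q}`: obtained from `T_{n,r}` by adding, inside a smallest
part, a triangle if `q = 3` and a star with `q` edges otherwise. -/
def IsLGraph (n r q : ℕ) (H : SimpleGraph (Fin n)) : Prop :=
  turanGraph n r ≤ H ∧
    ∃ i < r, (∀ j < r, (turanPart n r i).card ≤ (turanPart n r j).card) ∧
      (if q = 3 then IsTriangleOn (H \ turanGraph n r) (turanPart n r i : Set (Fin n))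
       else IsStarOn q (H \ turanGraph n r) (turanPart n r i : Set (Fin n)))

/-- `H` is (a copy of) `T_{n,r,q}`: obtained from `T_{n,r}` by adding a star with `q`
edges inside a largest part. -/
def IsTStarGraph (n r q : ℕ) (H : SimpleGraph (Fin n)) : Prop :=
  turanGraph n r ≤ H ∧
    ∃ i < r, (∀ j < r, (turanPart n r j).card ≤ (turanPart n r i).card) ∧
      IsStarOn q (H \ turanGraph n r) (turanPart n r i : Set (Fin n))

/-- The size of the `i`-th part of the partition `p`. -/
def partSize {n r : ℕ} (p : Fin n → Fin r) (i : Fin r) : ℕ :=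
  (Finset.univ.filter (fun v => p v = i)).card

/-- The complete multipartite graph determined by the partition `p`. -/
def multipartite {n r : ℕ} (p : Fin n → Fin r) : SimpleGraph (Fin n) where
  Adj u v := p u ≠ p v
  symm := ⟨fun _ _ h => Ne.symm h⟩
  loopless := ⟨fun _ h => h rfl⟩

/-- `G` is obtained from the complete multipartite graph of `p` by adding `α₁` class-edges
and deleting `α₂` cross-edges. -/
def ObtainedFrom {n r : ℕ} (p : Fin n → Fin r) (G : SimpleGraph (Fin n)) (α₁ α₂ : ℕ) : Prop :=
  Nat.card (G.edgeSet \ (multipartite p).edgeSet : Set (Sym2 (Fin n))) = α₁ ∧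
    Nat.card ((multipartite p).edgeSet \ G.edgeSet : Set (Sym2 (Fin n))) = α₂

/-- An edge is a class-edge (w.r.t. the partition `p`) if both endpoints lie in one part. -/
def IsClassEdge {n r : ℕ} (p : Fin n → Fin r) (e : Sym2 (Fin n)) : Prop :=
  ∀ u ∈ e, ∀ v ∈ e, p u = p v

/-- The number of edges of `G` inside the `i`-th part of `p`. -/
noncomputable def edgesInside {n r : ℕ} (G : SimpleGraph (Fin n)) (p : Fin n → Fin r)
    (i : Fin r) : ℕ :=
  Nat.card {e : Sym2 (Fin n) | e ∈ G.edgeSet ∧ ∀ v ∈ e, p v = i}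

/-- The `F`-covering number: minimum size of a vertex set meeting every copy of `F` in `G`. -/
noncomputable def coveringNumber {V W : Type*} [Fintype V] (F : SimpleGraph W)
    (G : SimpleGraph V) : ℕ :=
  sInf {k : ℕ | ∃ S : Finset V, S.card = k ∧
    ∀ H : G.Subgraph, Nonempty (H.coe ≃g F) → ∃ v ∈ S, v ∈ H.verts}

instance {n r : ℕ} (p : Fin n → Fin r) : DecidableRel (multipartite p).Adj :=
  fun u v => inferInstanceAs (Decidable (p u ≠ p v))

lemma sum_partSize {n r : ℕ} (p : Fin n → Fin r) :
    ∑ i : Fin r, partSize p i = n := by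
  classical
  have := Finset.card_eq_sum_card_fiberwise (f := p) (s := Finset.univ) (t := Finset.univ)
    (fun v _ => Finset.mem_univ (p v))
  simpa [partSize] using this.symm

lemma mult_count {n r : ℕ} (p : Fin n → Fin r) :
    2 * (multipartite p).edgeFinset.card + ∑ i : Fin r, (partSize p i)^2 = n^2 := by
  classical
  have hdeg : ∀ v : Fin n, (multipartite p).degree v + partSize p (p v) = n := by
    intro v
    have : (multipartite p).degree v
        = (Finset.univ.filter (fun w => ¬ p w = p v)).card := by
      rw [SimpleGraph.degree]
      congr 1
      ext w
      simp [SimpleGraph.neighborFinset, SimpleGraph.neighborSet, multipartite, ne_comm, eq_comm]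
      convert Set.mem_toFinset (s := {w | ¬p v = p w}) (a := w)
      exact Set.toFinset_congr rfl
    rw [this, partSize, add_comm]
    have := Finset.card_filter_add_card_filter_not (s := (Finset.univ : Finset (Fin n)))
      (p := fun w => p w = p v)
    simpa using this
  have h1 : ∑ v : Fin n, ((multipartite p).degree v + partSize p (p v)) = n * n := by
    simp [hdeg]
  rw [Finset.sum_add_distrib, SimpleGraph.sum_degrees_eq_twice_card_edges] at h1
  have h2 : ∑ v : Fin n, partSize p (p v) = ∑ i : Fin r, (partSize p i)^2 := by
    rw [← Finset.sum_fiberwise_of_maps_to (g := p) (t := Finset.univ)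
      (fun v _ => Finset.mem_univ (p v)) (fun v => partSize p (p v))]
    refine Finset.sum_congr rfl (fun i _ => ?_)
    rw [Finset.sum_congr rfl (fun v hv => by
      rw [(Finset.mem_filter.mp hv).2]), Finset.sum_const]
    simp [partSize, sq]
  rw [h2] at h1
  rw [h1]; ring

lemma edge_count_le {n r : ℕ} (G : SimpleGraph (Fin n)) (p : Fin n → Fin r) :
    Nat.card G.edgeSet ≤ (multipartite p).edgeFinset.card + ∑ i : Fin r, edgesInside G p i := by
  classical
  set E := G.edgeSet.toFinset with hE
  have hcard : Nat.card G.edgeSet = E.card := by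
    rw [Nat.card_coe_set_eq, Set.ncard_eq_toFinset_card']
  rw [hcard,
    ← Finset.card_filter_add_card_filter_not
      (s := E) (p := fun e => e ∈ (multipartite p).edgeFinset)]
  refine add_le_add ?_ ?_
  · apply Finset.card_le_card
    intro e he
    exact (Finset.mem_filter.mp he).2
  · set f : Sym2 (Fin n) → Fin r := fun e => p (Quot.out e).1 with hf
    rw [Finset.card_eq_sum_card_fiberwise
      (f := f) (t := Finset.univ) (fun e _ => Finset.mem_univ (f e))]
    refine Finset.sum_le_sum (fun i _ => ?_)
    -- fiber ⊆ the set defining edgesInside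
    have hsub : ((E.filter (fun e => ¬ e ∈ (multipartite p).edgeFinset)).filter
        (fun e => f e = i) : Set (Sym2 (Fin n)))
        ⊆ {e : Sym2 (Fin n) | e ∈ G.edgeSet ∧ ∀ v ∈ e, p v = i} := by
      intro e he
      rw [Finset.mem_coe, Finset.mem_filter, Finset.mem_filter] at he
      obtain ⟨⟨heE, hnot⟩, hfi⟩ := he
      have heG : e ∈ G.edgeSet := by simpa [hE] using heE
      set a := (Quot.out e).1 with ha
      set b := (Quot.out e).2 with hb
      have heq : s(a, b) = e := by
        rw [ha, hb]; exact Quot.out_eq e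
      have hpab : p a = p b := by
        by_contra hne
        apply hnot
        rw [SimpleGraph.mem_edgeFinset, ← heq, SimpleGraph.mem_edgeSet]
        exact hne
      refine ⟨heG, fun v hv => ?_⟩
      rw [← heq, Sym2.mem_iff] at hv
      rcases hv with rfl | rfl
      · exact hfi
      · rw [← hpab]; exact hfi
    have hfin : {e : Sym2 (Fin n) | e ∈ G.edgeSet ∧ ∀ v ∈ e, p v = i}.Finite :=
      Set.Finite.subset (Set.finite_univ) (Set.subset_univ _)
    calc ((E.filter (fun e => ¬ e ∈ (multipartite p).edgeFinset)).filter
          (fun e => f e = i)).card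
        = (((E.filter (fun e => ¬ e ∈ (multipartite p).edgeFinset)).filter
          (fun e => f e = i) : Finset (Sym2 (Fin n))) : Set (Sym2 (Fin n))).ncard := by
          rw [Set.ncard_coe_finset]
      _ ≤ _ := by
          rw [edgesInside, Nat.card_coe_set_eq]
          exact Set.ncard_le_ncard hsub hfin

/-- Lemma 2.6 / `lem-BC`. Part sizes of an almost extremal graph with a
partition having few internal edges are nearly balanced. -/
theorem statement9 (r : ℕ) (hr : 1 ≤ r) (s t : ℝ) (hs : 0 ≤ s) (ht : 0 ≤ t)
    (n : ℕ) (G : SimpleGraph (Fin n)) (p : Fin n → Fin r)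
    (he : (1 - 1 / (r : ℝ)) * (n : ℝ) ^ 2 / 2 - t ≤ (Nat.card G.edgeSet : ℝ))
    (hin : (∑ i : Fin r, (edgesInside G p i : ℝ)) ≤ s) :
    ∀ i : Fin r,
      (n : ℝ) / r - Real.sqrt (2 * (s + t)) ≤ (partSize p i : ℝ) ∧
      (partSize p i : ℝ) ≤ (n : ℝ) / r + Real.sqrt (2 * (s + t)) := by
  classical
  intro i
  have hsqrt : 0 ≤ Real.sqrt (2 * (s + t)) := Real.sqrt_nonneg _
  by_cases hr1 : r = 1
  · subst hr1
    have hps : partSize p i = n := by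
      have : ∀ v : Fin n, p v = i := fun v => Subsingleton.elim _ _
      simp [partSize, this]
    rw [hps]
    refine ⟨by push_cast; linarith, by push_cast; linarith⟩
  · have hr2 : 2 ≤ r := by omega
    set R := (r : ℝ) with hR
    have hR2 : (2 : ℝ) ≤ R := by rw [hR]; exact_mod_cast hr2
    have hR0 : (0 : ℝ) < R := by linarith
    set C := 2 * (s + t) with hC
    have hC0 : 0 ≤ C := by positivity
    set x := (partSize p i : ℝ) with hx
    -- edge counting
    set M := ((multipartite p).edgeFinset.card : ℝ) with hM
    set Q := ∑ j : Fin r, (partSize p j : ℝ) ^ 2 with hQ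
    have hmult : 2 * M + Q = (n : ℝ) ^ 2 := by
      rw [hM, hQ]
      exact_mod_cast mult_count p
    have hle : (Nat.card G.edgeSet : ℝ) ≤ M + s := by
      have h1 := edge_count_le G p
      have h2 : (Nat.card G.edgeSet : ℝ)
          ≤ M + ∑ j : Fin r, (edgesInside G p j : ℝ) := by
        rw [hM]; exact_mod_cast h1
      linarith
    have key : Q ≤ (n : ℝ) ^ 2 / R + C := by
      have harith : (1 - 1 / R) * (n : ℝ) ^ 2 / 2
          = ((n : ℝ) ^ 2 - (n : ℝ) ^ 2 / R) / 2 := by ring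
      rw [harith] at he
      linarith
    have key' : R * Q ≤ (n : ℝ) ^ 2 + R * C := by
      have h := mul_le_mul_of_nonneg_left key hR0.le
      rw [mul_add, mul_div_cancel₀ _ hR0.ne'] at h
      exact h
    -- Cauchy-Schwarz on the other parts
    set S2 := ∑ j ∈ Finset.univ.erase i, (partSize p j : ℝ) ^ 2 with hS2
    have hQsplit : Q = x ^ 2 + S2 := by
      rw [hQ, ← Finset.add_sum_erase _ _ (Finset.mem_univ i)]
    have hsum : x + ∑ j ∈ Finset.univ.erase i, (partSize p j : ℝ) = (n : ℝ) := by
      have h := Finset.add_sum_erase Finset.univ (fun j => ((partSize p j : ℕ) : ℝ))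
        (Finset.mem_univ i)
      rw [hx, h]
      exact_mod_cast congrArg (Nat.cast : ℕ → ℝ) (sum_partSize p)
    have hcardE : ((Finset.univ.erase i).card : ℝ) = R - 1 := by
      rw [Finset.card_erase_of_mem (Finset.mem_univ i)]
      simp only [Finset.card_univ, Fintype.card_fin]
      push_cast [Nat.cast_sub hr]
      ring
    have hCS : ((n : ℝ) - x) ^ 2 ≤ (R - 1) * S2 := by
      have := sq_sum_le_card_mul_sum_sq
        (s := Finset.univ.erase i) (f := fun j => (partSize p j : ℝ))
      rw [hcardE] at this
      have heq : ∑ j ∈ Finset.univ.erase i, (partSize p j : ℝ) = (n : ℝ) - x := by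
        linarith
      rw [heq] at this
      exact this
    have key'' : R * x ^ 2 + R * S2 ≤ (n : ℝ) ^ 2 + R * C := by
      rw [hQsplit] at key'
      linarith [key']
    have hfinal : (R * x - (n : ℝ)) ^ 2 ≤ R ^ 2 * C := by
      nlinarith [mul_le_mul_of_nonneg_left hCS hR0.le,
        mul_le_mul_of_nonneg_left key'' (by linarith : (0:ℝ) ≤ R - 1),
        mul_nonneg hC0 hR0.le]
    have hsq : (x - (n : ℝ) / R) ^ 2 ≤ C := by
      have heq2 : (x - (n : ℝ) / R) ^ 2 = (R * x - (n : ℝ)) ^ 2 / R ^ 2 := by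
        field_simp
      rw [heq2, div_le_iff₀ (by positivity)]
      linarith [hfinal]
    have habs : |x - (n : ℝ) / R| ≤ Real.sqrt C := by
      rw [← Real.sqrt_sq_eq_abs]
      exact Real.sqrt_le_sqrt hsq
    obtain ⟨h1, h2⟩ := abs_le.mp habs
    constructor <;> [linarith; linarith]
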